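/- Approximation operator bound: with weights w_j = (x_{j+1}−x_{j−1})/2 and δ < 1/M, the operator S on the space P_M of cosine polynomials of degree ≤ M defined by Sp = P(Σ_{j=1}^r p(x_j) χ_j), where P is the orthogonal projection of L²([0,1]) onto P_M and χ_j is the indicator of [y_{j−1}, y_j] with y_j = (x_j + x_{j+1})/2, satisfies ‖p − Sp‖₂ ≤ δM ‖p‖₂ for all p ∈ P_M; hence S is invertible on P_M with ‖S^{-1}‖ ≤ (1−δM)^{-1}. -/

import Mathlib

open Real MeasureTheory

set_option maxHeartbeats 1600000

section AuxApproxOp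
open intervalIntegral Finset

lemma aux_int_cos (γ : ℝ) (hγ : γ ≠ 0) :
    ∫ t in (0:ℝ)..1, Real.cos (γ * t) = Real.sin γ / γ := by
  have h := intervalIntegral.integral_comp_mul_left (f := fun x => Real.cos x) (a := (0:ℝ)) (b := 1) hγ
  simp [integral_cos] at h
  rw [h]
  field_simp

lemma aux_int_cos_int (m : ℤ) (hm : m ≠ 0) :
    ∫ t in (0:ℝ)..1, Real.cos (Real.pi * m * t) = 0 := by
  rw [aux_int_cos _ (by positivity), mul_comm Real.pi (m:ℝ), Real.sin_int_mul_pi, zero_div]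

lemma aux_int_cos_nat (m : ℕ) :
    ∫ t in (0:ℝ)..1, Real.cos (Real.pi * m * t) = if m = 0 then 1 else 0 := by
  by_cases h : m = 0
  · simp [h]
  · rw [if_neg h]
    exact_mod_cast aux_int_cos_int m (by exact_mod_cast h)

lemma aux_orth_cos (k l : ℕ) (hk : 1 ≤ k) (hl : 1 ≤ l) :
    ∫ t in (0:ℝ)..1, Real.cos (Real.pi * k * t) * Real.cos (Real.pi * l * t)
      = if k = l then 1/2 else 0 := by
  have hpt : ∀ t : ℝ, Real.cos (Real.pi * k * t) * Real.cos (Real.pi * l * t)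
      = (Real.cos (Real.pi * (k + l : ℕ) * t) + Real.cos (Real.pi * ((k:ℤ) - l) * t)) / 2 := by
    intro t
    have h1 := Real.cos_add (Real.pi * k * t) (Real.pi * l * t)
    have h2 := Real.cos_sub (Real.pi * k * t) (Real.pi * l * t)
    push_cast
    rw [show Real.pi * ((k:ℝ) + l) * t = Real.pi * k * t + Real.pi * l * t by ring,
        show Real.pi * ((k:ℝ) - l) * t = Real.pi * k * t - Real.pi * l * t by ring,
        h1, h2]
    ring
  simp only [hpt]
  rw [intervalIntegral.integral_div]
  have hsum : IntervalIntegrable (fun t => Real.cos (Real.pi * (k+l : ℕ) * t)) volume 0 1 :=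
    (by continuity : Continuous fun t : ℝ => Real.cos (Real.pi * (k+l : ℕ) * t)).intervalIntegrable _ _
  have hdiff : IntervalIntegrable (fun t => Real.cos (Real.pi * ((k:ℤ) - l) * t)) volume 0 1 :=
    (by continuity : Continuous fun t : ℝ => Real.cos (Real.pi * ((k:ℤ) - l) * t)).intervalIntegrable _ _
  rw [intervalIntegral.integral_add hsum hdiff]
  have h1 : ∫ t in (0:ℝ)..1, Real.cos (Real.pi * ((k+l:ℕ):ℝ) * t) = 0 := by
    have := aux_int_cos_int (k + l) (by omega)
    push_cast at this ⊢; exact this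
  rw [h1]
  by_cases h : k = l
  · subst h
    norm_num
  · have h2 : ∫ t in (0:ℝ)..1, Real.cos (Real.pi * ((k:ℤ) - l : ℝ) * t) = 0 := by
      have := aux_int_cos_int ((k:ℤ) - l) (by omega)
      push_cast at this ⊢; exact this
    rw [h2]
    norm_num [h]

lemma aux_orth_sin (k l : ℕ) (hk : 1 ≤ k) (hl : 1 ≤ l) :
    ∫ t in (0:ℝ)..1, Real.sin (Real.pi * k * t) * Real.sin (Real.pi * l * t)
      = if k = l then 1/2 else 0 := by
  have hpt : ∀ t : ℝ, Real.sin (Real.pi * k * t) * Real.sin (Real.pi * l * t)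
      = (Real.cos (Real.pi * ((k:ℤ) - l) * t) - Real.cos (Real.pi * (k + l : ℕ) * t)) / 2 := by
    intro t
    have h1 := Real.cos_add (Real.pi * k * t) (Real.pi * l * t)
    have h2 := Real.cos_sub (Real.pi * k * t) (Real.pi * l * t)
    push_cast
    rw [show Real.pi * ((k:ℝ) + l) * t = Real.pi * k * t + Real.pi * l * t by ring,
        show Real.pi * ((k:ℝ) - l) * t = Real.pi * k * t - Real.pi * l * t by ring,
        h1, h2]
    ring
  simp only [hpt]
  rw [intervalIntegral.integral_div]
  have hsum : IntervalIntegrable (fun t => Real.cos (Real.pi * (k+l : ℕ) * t)) volume 0 1 :=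
    (by continuity : Continuous fun t : ℝ => Real.cos (Real.pi * (k+l : ℕ) * t)).intervalIntegrable _ _
  have hdiff : IntervalIntegrable (fun t => Real.cos (Real.pi * ((k:ℤ) - l) * t)) volume 0 1 :=
    (by continuity : Continuous fun t : ℝ => Real.cos (Real.pi * ((k:ℤ) - l) * t)).intervalIntegrable _ _
  rw [intervalIntegral.integral_sub hdiff hsum]
  have h1 : ∫ t in (0:ℝ)..1, Real.cos (Real.pi * ((k+l:ℕ):ℝ) * t) = 0 := by
    have := aux_int_cos_int (k + l) (by omega)
    push_cast at this ⊢; exact this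
  rw [h1]
  by_cases h : k = l
  · subst h
    norm_num
  · have h2 : ∫ t in (0:ℝ)..1, Real.cos (Real.pi * ((k:ℤ) - l : ℝ) * t) = 0 := by
      have := aux_int_cos_int ((k:ℤ) - l) (by omega)
      push_cast at this ⊢; exact this
    rw [h2]
    norm_num [h]


lemma aux_cont_cos (k : ℕ) : Continuous fun t : ℝ => Real.cos (Real.pi * k * t) :=
  Real.continuous_cos.comp (continuous_const.mul continuous_id)

lemma aux_cont_sin (k : ℕ) : Continuous fun t : ℝ => Real.sin (Real.pi * k * t) :=
  Real.continuous_sin.comp (continuous_const.mul continuous_id)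

lemma aux_parseval (M : ℕ) (c : ℕ → ℝ) :
    ∫ t in (0:ℝ)..1,
        (c 0 / Real.sqrt 2 + ∑ k ∈ Finset.Icc 1 M, c k * Real.cos (Real.pi * k * t))^2
      = ((c 0)^2 + ∑ k ∈ Finset.Icc 1 M, (c k)^2) / 2 := by
  set A := c 0 / Real.sqrt 2 with hA
  have hpt : ∀ t : ℝ,
      (A + ∑ k ∈ Finset.Icc 1 M, c k * Real.cos (Real.pi * k * t))^2
      = A^2 + (∑ k ∈ Finset.Icc 1 M, (2*A*c k) * Real.cos (Real.pi * k * t))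
        + ∑ k ∈ Finset.Icc 1 M, ∑ l ∈ Finset.Icc 1 M,
            (c k * c l) * (Real.cos (Real.pi * k * t) * Real.cos (Real.pi * l * t)) := by
    intro t
    rw [add_sq, pow_two (∑ k ∈ Finset.Icc 1 M, c k * Real.cos (Real.pi * k * t)),
        Finset.sum_mul_sum, Finset.mul_sum]
    congr 1
    · congr 1
      exact Finset.sum_congr rfl fun k _ => by ring
    · exact Finset.sum_congr rfl fun k _ => Finset.sum_congr rfl fun l _ => by ring
  simp only [hpt]
  have c1 : ∀ k : ℕ, Continuous fun t : ℝ => (2*A*c k) * Real.cos (Real.pi * k * t) :=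
    fun k => continuous_const.mul (aux_cont_cos k)
  have c2 : ∀ k l : ℕ, Continuous fun t : ℝ =>
      (c k * c l) * (Real.cos (Real.pi * k * t) * Real.cos (Real.pi * l * t)) :=
    fun k l => continuous_const.mul ((aux_cont_cos k).mul (aux_cont_cos l))
  have hS1 : Continuous fun t : ℝ =>
      ∑ k ∈ Finset.Icc 1 M, (2*A*c k) * Real.cos (Real.pi * k * t) :=
    continuous_finset_sum _ fun k _ => c1 k
  have hS2 : Continuous fun t : ℝ => ∑ k ∈ Finset.Icc 1 M, ∑ l ∈ Finset.Icc 1 M,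
      (c k * c l) * (Real.cos (Real.pi * k * t) * Real.cos (Real.pi * l * t)) :=
    continuous_finset_sum _ fun k _ => continuous_finset_sum _ fun l _ => c2 k l
  rw [intervalIntegral.integral_add (show IntervalIntegrable (fun t => A^2 + ∑ k ∈ Finset.Icc 1 M, (2*A*c k) * Real.cos (Real.pi * k * t)) volume 0 1 from ((continuous_const.add hS1)).intervalIntegrable _ _)
        (hS2.intervalIntegrable _ _),
      intervalIntegral.integral_add ((continuous_const (y := A^2)).intervalIntegrable _ _)
        (hS1.intervalIntegrable _ _)]
  rw [intervalIntegral.integral_finset_sum (fun k _ => (c1 k).intervalIntegrable _ _),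
      intervalIntegral.integral_finset_sum
        (fun k _ => (continuous_finset_sum _ fun l _ => c2 k l).intervalIntegrable _ _)]
  have e1 : ∑ k ∈ Finset.Icc 1 M, (∫ t in (0:ℝ)..1, (2*A*c k) * Real.cos (Real.pi * k * t)) = 0 := by
    refine Finset.sum_eq_zero fun k hk => ?_
    rw [intervalIntegral.integral_const_mul, aux_int_cos_nat k,
        if_neg (by simp at hk; omega), mul_zero]
  rw [e1]
  have e2 : ∀ k ∈ Finset.Icc 1 M,
      (∫ t in (0:ℝ)..1, ∑ l ∈ Finset.Icc 1 M,
        (c k * c l) * (Real.cos (Real.pi * k * t) * Real.cos (Real.pi * l * t)))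
      = (c k)^2 / 2 := by
    intro k hk
    rw [intervalIntegral.integral_finset_sum (fun l _ => (c2 k l).intervalIntegrable _ _)]
    have hterm : ∀ l ∈ Finset.Icc 1 M,
        (∫ t in (0:ℝ)..1, (c k * c l) * (Real.cos (Real.pi * k * t) * Real.cos (Real.pi * l * t)))
        = if k = l then (c k)^2/2 else 0 := by
      intro l hl
      rw [intervalIntegral.integral_const_mul,
          aux_orth_cos k l (by simp at hk; omega) (by simp at hl; omega)]
      by_cases h : k = l
      · subst h; simp; ring
      · simp [h]
    rw [Finset.sum_congr rfl hterm, Finset.sum_ite_eq (Finset.Icc 1 M) k (fun _ => (c k)^2/2),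
        if_pos hk]
  rw [Finset.sum_congr rfl e2]
  have hA2 : A^2 = (c 0)^2 / 2 := by
    rw [hA, div_pow, Real.sq_sqrt (by norm_num : (0:ℝ) ≤ 2)]
  simp only [intervalIntegral.integral_const, smul_eq_mul, sub_zero, one_mul]
  rw [hA2, ← Finset.sum_div]
  ring

lemma aux_parseval_sin (M : ℕ) (b : ℕ → ℝ) :
    ∫ t in (0:ℝ)..1, (∑ k ∈ Finset.Icc 1 M, b k * Real.sin (Real.pi * k * t))^2
      = (∑ k ∈ Finset.Icc 1 M, (b k)^2) / 2 := by
  have hpt : ∀ t : ℝ,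
      (∑ k ∈ Finset.Icc 1 M, b k * Real.sin (Real.pi * k * t))^2
      = ∑ k ∈ Finset.Icc 1 M, ∑ l ∈ Finset.Icc 1 M,
          (b k * b l) * (Real.sin (Real.pi * k * t) * Real.sin (Real.pi * l * t)) := by
    intro t
    rw [pow_two, Finset.sum_mul_sum]
    exact Finset.sum_congr rfl fun k _ => Finset.sum_congr rfl fun l _ => by ring
  simp only [hpt]
  have c2 : ∀ k l : ℕ, Continuous fun t : ℝ =>
      (b k * b l) * (Real.sin (Real.pi * k * t) * Real.sin (Real.pi * l * t)) :=
    fun k l => continuous_const.mul ((aux_cont_sin k).mul (aux_cont_sin l))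
  rw [intervalIntegral.integral_finset_sum
      (fun k _ => (continuous_finset_sum _ fun l _ => c2 k l).intervalIntegrable _ _)]
  have e2 : ∀ k ∈ Finset.Icc 1 M,
      (∫ t in (0:ℝ)..1, ∑ l ∈ Finset.Icc 1 M,
        (b k * b l) * (Real.sin (Real.pi * k * t) * Real.sin (Real.pi * l * t)))
      = (b k)^2 / 2 := by
    intro k hk
    rw [intervalIntegral.integral_finset_sum (fun l _ => (c2 k l).intervalIntegrable _ _)]
    have hterm : ∀ l ∈ Finset.Icc 1 M,
        (∫ t in (0:ℝ)..1, (b k * b l) * (Real.sin (Real.pi * k * t) * Real.sin (Real.pi * l * t)))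
        = if k = l then (b k)^2/2 else 0 := by
      intro l hl
      rw [intervalIntegral.integral_const_mul,
          aux_orth_sin k l (by simp at hk; omega) (by simp at hl; omega)]
      by_cases h : k = l
      · subst h; simp; ring
      · simp [h]
    rw [Finset.sum_congr rfl hterm, Finset.sum_ite_eq (Finset.Icc 1 M) k (fun _ => (b k)^2/2),
        if_pos hk]
  rw [Finset.sum_congr rfl e2, ← Finset.sum_div]


set_option maxHeartbeats 1000000

lemma aux_wirtinger (f f' : ℝ → ℝ) (hd : ∀ t, HasDerivAt f (f' t) t) (hc : Continuous f')
    {h : ℝ} (hh : 0 < h) (hf0 : f 0 = 0) :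
    ∫ t in (0:ℝ)..h, (f t)^2 ≤ (2*h/Real.pi)^2 * ∫ t in (0:ℝ)..h, (f' t)^2 := by
  have hπ := Real.pi_pos
  set c : ℝ := Real.pi / (2*h) with hcdef
  have hcpos : 0 < c := by positivity
  have hch : c * h = Real.pi / 2 := by rw [hcdef]; field_simp
  have fcont : Continuous f := by
    rw [continuous_iff_continuousAt]; exact fun t => (hd t).continuousAt
  obtain ⟨L, hL⟩ := isCompact_Icc.exists_bound_of_continuousOn (s := Set.Icc (0:ℝ) h)
    hc.continuousOn
  have hL0 : 0 ≤ L := le_trans (norm_nonneg _) (hL 0 ⟨le_refl _, hh.le⟩)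
  have hfb : ∀ t ∈ Set.Icc (0:ℝ) h, |f t| ≤ L * t := by
    intro t ht
    have hft : ∫ u in (0:ℝ)..t, f' u = f t := by
      rw [intervalIntegral.integral_eq_sub_of_hasDerivAt (fun u _ => hd u)
        (hc.intervalIntegrable _ _), hf0, sub_zero]
    have hb := intervalIntegral.norm_integral_le_of_norm_le_const (a := (0:ℝ)) (b := t)
      (C := L) (f := f') (fun u hu => by
        rw [Set.uIoc_of_le ht.1] at hu
        exact hL u ⟨hu.1.le, hu.2.trans ht.2⟩)
    rw [Real.norm_eq_abs] at hb
    calc |f t| = |∫ u in (0:ℝ)..t, f' u| := by rw [hft]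
    _ ≤ L * |t - 0| := hb
    _ = L * t := by rw [sub_zero, abs_of_nonneg ht.1]
  -- key per-epsilon inequality
  have key : ∀ ε : ℝ, 0 < ε → ε ≤ h →
      c^2 * (∫ t in ε..h, (f t)^2) ≤ (∫ t in ε..h, (f' t)^2)
        + c * ((f ε)^2 * (Real.cos (c*ε) / Real.sin (c*ε))) := by
    intro ε hε hεh
    have hsin : ∀ t ∈ Set.Icc ε h, 0 < Real.sin (c*t) := by
      intro t ht
      apply Real.sin_pos_of_pos_of_lt_pi
      · have : 0 < t := lt_of_lt_of_le hε ht.1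
        positivity
      · have : c * t ≤ c * h := mul_le_mul_of_nonneg_left ht.2 hcpos.le
        rw [hch] at this
        linarith
    set w : ℝ → ℝ := fun t => (f t)^2 * (Real.cos (c*t) / Real.sin (c*t)) with hwdef
    set w' : ℝ → ℝ := fun t => 2 * f t * f' t * (Real.cos (c*t) / Real.sin (c*t))
        - c * (f t)^2 / (Real.sin (c*t))^2 with hw'def
    have hw : ∀ t ∈ Set.uIcc ε h, HasDerivAt w (w' t) t := by
      rw [Set.uIcc_of_le hεh]
      intro t ht
      have hs := hsin t ht
      have hpyth : Real.sin (c*t)^2 + Real.cos (c*t)^2 = 1 := Real.sin_sq_add_cos_sq _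
      have hsinD : HasDerivAt (fun u : ℝ => Real.sin (c*u)) (Real.cos (c*t) * (c*1)) t :=
        (Real.hasDerivAt_sin (c*t)).comp t ((hasDerivAt_id t).const_mul c)
      have hcosD : HasDerivAt (fun u : ℝ => Real.cos (c*u)) (-Real.sin (c*t) * (c*1)) t :=
        (Real.hasDerivAt_cos (c*t)).comp t ((hasDerivAt_id t).const_mul c)
      have hdiv : HasDerivAt (fun u : ℝ => Real.cos (c*u) / Real.sin (c*u))
          ((-Real.sin (c*t) * (c*1) * Real.sin (c*t) - Real.cos (c*t) * (Real.cos (c*t) * (c*1)))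
            / (Real.sin (c*t))^2) t := hcosD.div hsinD hs.ne'
      have hfsq : HasDerivAt (fun u : ℝ => (f u)^2) (2 * f t * f' t) t := by
        have := (hd t).fun_pow 2
        simpa [mul_comm, mul_assoc, mul_left_comm] using this
      have hmul := hfsq.fun_mul hdiv
      refine hmul.congr_deriv ?_
      have hnum : -Real.sin (c*t) * (c*1) * Real.sin (c*t)
          - Real.cos (c*t) * (Real.cos (c*t) * (c*1)) = -c := by
        linear_combination (-c) * hpyth
      rw [hw'def, hnum]
      ring
    have hw'cont : ContinuousOn w' (Set.uIcc ε h) := by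
      rw [Set.uIcc_of_le hεh]
      have hsc : ContinuousOn (fun t : ℝ => Real.sin (c*t)) (Set.Icc ε h) :=
        (Real.continuous_sin.comp (continuous_const.mul continuous_id)).continuousOn
      have hcc : ContinuousOn (fun t : ℝ => Real.cos (c*t)) (Set.Icc ε h) :=
        (Real.continuous_cos.comp (continuous_const.mul continuous_id)).continuousOn
      apply ContinuousOn.sub
      · exact ((continuous_const.mul fcont).mul hc).continuousOn.mul
          (hcc.div hsc (fun t ht => (hsin t ht).ne'))
      · exact (continuous_const.mul (fcont.pow 2)).continuousOn.div
          (hsc.pow 2) (fun t ht => by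
            have := hsin t ht; positivity)
    have hw'int : IntervalIntegrable w' volume ε h := hw'cont.intervalIntegrable
    have hFTC : ∫ t in ε..h, w' t = w h - w ε :=
      intervalIntegral.integral_eq_sub_of_hasDerivAt hw hw'int
    have hwh : w h = 0 := by
      rw [hwdef]
      simp only [hch, Real.cos_pi_div_two, zero_div, mul_zero]
    -- pointwise identity
    set G : ℝ → ℝ := fun t => f' t - c * f t * (Real.cos (c*t) / Real.sin (c*t)) with hGdef
    have hpt : Set.EqOn (fun t => (f' t)^2 - c * w' t)
        (fun t => (G t)^2 + c^2 * (f t)^2) (Set.uIcc ε h) := by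
      rw [Set.uIcc_of_le hεh]
      intro t ht
      have hs := (hsin t ht).ne'
      have hpyth : Real.sin (c*t)^2 + Real.cos (c*t)^2 = 1 := Real.sin_sq_add_cos_sq _
      simp only [hw'def, hGdef]
      have e1 : (Real.cos (c*t)/Real.sin (c*t))^2 = 1/Real.sin (c*t)^2 - 1 := by
        rw [div_pow, show Real.cos (c*t)^2 = 1 - Real.sin (c*t)^2 by linarith]
        field_simp
      linear_combination (-(c^2) * f t^2) * e1
    have hGcont : ContinuousOn G (Set.uIcc ε h) := by
      rw [Set.uIcc_of_le hεh]
      have hsc : ContinuousOn (fun t : ℝ => Real.sin (c*t)) (Set.Icc ε h) :=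
        (Real.continuous_sin.comp (continuous_const.mul continuous_id)).continuousOn
      have hcc : ContinuousOn (fun t : ℝ => Real.cos (c*t)) (Set.Icc ε h) :=
        (Real.continuous_cos.comp (continuous_const.mul continuous_id)).continuousOn
      exact hc.continuousOn.sub (((continuous_const.mul fcont).continuousOn).mul
        (hcc.div hsc (fun t ht => (hsin t ht).ne')))
    have hint_eq : ∫ t in ε..h, ((f' t)^2 - c * w' t)
        = ∫ t in ε..h, ((G t)^2 + c^2 * (f t)^2) := intervalIntegral.integral_congr hpt
    have hlhs : ∫ t in ε..h, ((f' t)^2 - c * w' t)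
        = (∫ t in ε..h, (f' t)^2) - c * (w h - w ε) := by
      rw [intervalIntegral.integral_sub (show IntervalIntegrable (fun t => (f' t)^2) volume ε h from (hc.pow 2).intervalIntegrable _ _)
        (hw'int.const_mul c), intervalIntegral.integral_const_mul, hFTC]
    have hrhs : ∫ t in ε..h, ((G t)^2 + c^2 * (f t)^2)
        = (∫ t in ε..h, (G t)^2) + c^2 * ∫ t in ε..h, (f t)^2 := by
      rw [intervalIntegral.integral_add (show IntervalIntegrable (fun t => (G t)^2) volume ε h from (hGcont.pow 2).intervalIntegrable)
        ((show IntervalIntegrable (fun t => (f t)^2) volume ε h from (fcont.pow 2).intervalIntegrable _ _).const_mul (c^2)),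
        intervalIntegral.integral_const_mul]
    have hGnn : 0 ≤ ∫ t in ε..h, (G t)^2 :=
      intervalIntegral.integral_nonneg hεh (fun t _ => sq_nonneg _)
    have hfin := hint_eq
    rw [hlhs, hrhs, hwh] at hfin
    simp only [hwdef] at hfin
    linarith [hGnn, hfin]
  -- integrability
  have hf2int : ∀ a b : ℝ, IntervalIntegrable (fun t => (f t)^2) volume a b :=
    fun a b => (fcont.pow 2).intervalIntegrable _ _
  have hf'2int : ∀ a b : ℝ, IntervalIntegrable (fun t => (f' t)^2) volume a b :=
    fun a b => (hc.pow 2).intervalIntegrable _ _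
  -- limit
  have main : c^2 * ∫ t in (0:ℝ)..h, (f t)^2 ≤ ∫ t in (0:ℝ)..h, (f' t)^2 := by
    set C0 : ℝ := c^2 * L^2 * h^2 + c * L^2 * h with hC0
    have hC0nn : 0 ≤ C0 := by positivity
    have hstep : ∀ ε' : ℝ, 0 < ε' →
        c^2 * ∫ t in (0:ℝ)..h, (f t)^2 ≤ (∫ t in (0:ℝ)..h, (f' t)^2) + ε' := by
      intro ε' hε'
      set ε : ℝ := min h (ε' / (C0 + 1)) with hεdef
      have hεpos : 0 < ε := lt_min hh (by positivity)
      have hεh : ε ≤ h := min_le_left _ _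
      have hsplit : (∫ t in (0:ℝ)..h, (f t)^2)
          = (∫ t in (0:ℝ)..ε, (f t)^2) + ∫ t in ε..h, (f t)^2 :=
        (intervalIntegral.integral_add_adjacent_intervals (hf2int 0 ε) (hf2int ε h)).symm
      have hsplit' : (∫ t in (0:ℝ)..h, (f' t)^2)
          = (∫ t in (0:ℝ)..ε, (f' t)^2) + ∫ t in ε..h, (f' t)^2 :=
        (intervalIntegral.integral_add_adjacent_intervals (hf'2int 0 ε) (hf'2int ε h)).symm
      have h1 : ∫ t in (0:ℝ)..ε, (f t)^2 ≤ L^2 * h^2 * ε := by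
        have hb : ∀ t ∈ Set.Icc (0:ℝ) ε, (f t)^2 ≤ (L*h)^2 := by
          intro t ht
          have h1 := hfb t ⟨ht.1, ht.2.trans hεh⟩
          have h2 : L * t ≤ L * h := mul_le_mul_of_nonneg_left (ht.2.trans hεh) hL0
          have habs := abs_le.mp (h1.trans h2)
          exact sq_le_sq' habs.1 habs.2
        calc (∫ t in (0:ℝ)..ε, (f t)^2) ≤ ∫ _t in (0:ℝ)..ε, (L*h)^2 := by
              apply intervalIntegral.integral_mono_on hεpos.le (hf2int 0 ε)
                (intervalIntegrable_const) hb
        _ = (L*h)^2 * ε := by simp [mul_comm]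
        _ = L^2 * h^2 * ε := by ring
      have h2 : ∫ t in ε..h, (f' t)^2 ≤ ∫ t in (0:ℝ)..h, (f' t)^2 := by
        rw [hsplit']
        have : 0 ≤ ∫ t in (0:ℝ)..ε, (f' t)^2 :=
          intervalIntegral.integral_nonneg hεpos.le (fun t _ => sq_nonneg _)
        linarith
      -- bound the boundary term
      have h3 : c * ((f ε)^2 * (Real.cos (c*ε) / Real.sin (c*ε))) ≤ c * L^2 * h * ε := by
        have hcε1 : 0 < c * ε := by positivity
        have hcε2 : c * ε ≤ Real.pi / 2 := by
          have : c * ε ≤ c * h := mul_le_mul_of_nonneg_left hεh hcpos.le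
          rw [hch] at this; exact this
        have hsp : 0 < Real.sin (c*ε) :=
          Real.sin_pos_of_pos_of_lt_pi hcε1 (by linarith)
        have hsl : 2 / Real.pi * (c*ε) ≤ Real.sin (c*ε) := Real.mul_le_sin hcε1.le hcε2
        have hslε : ε / h ≤ Real.sin (c*ε) := by
          have : 2 / Real.pi * (c*ε) = ε / h := by
            rw [hcdef]; field_simp
          linarith [this ▸ hsl]
        have hcos1 : Real.cos (c*ε) ≤ 1 := Real.cos_le_one _
        have hcosnn : 0 ≤ Real.cos (c*ε) :=
          Real.cos_nonneg_of_mem_Icc ⟨by linarith, hcε2⟩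
        have hdivb : Real.cos (c*ε) / Real.sin (c*ε) ≤ h / ε := by
          rw [div_le_div_iff₀ hsp hεpos]
          calc Real.cos (c*ε) * ε ≤ 1 * ε :=
                mul_le_mul_of_nonneg_right hcos1 hεpos.le
          _ = ε := one_mul _
          _ ≤ h * Real.sin (c*ε) := by
              have := mul_le_mul_of_nonneg_left hslε hh.le
              calc ε = h * (ε / h) := by field_simp
              _ ≤ h * Real.sin (c*ε) := this
        have hfε : (f ε)^2 ≤ (L*ε)^2 := by
          have h1 := hfb ε ⟨hεpos.le, hεh⟩
          have habs := abs_le.mp h1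
          exact sq_le_sq' habs.1 habs.2
        have hmm : (f ε)^2 * (Real.cos (c*ε) / Real.sin (c*ε)) ≤ (L*ε)^2 * (h/ε) := by
          apply mul_le_mul hfε hdivb (by positivity) (by positivity)
        have heq : (L*ε)^2 * (h/ε) = L^2 * h * ε := by
          field_simp
        calc c * ((f ε)^2 * (Real.cos (c*ε) / Real.sin (c*ε)))
            ≤ c * ((L*ε)^2 * (h/ε)) := mul_le_mul_of_nonneg_left hmm hcpos.le
        _ = c * L^2 * h * ε := by rw [heq]; ring
      have hkey := key ε hεpos hεh
      have hC0ε : C0 * ε ≤ ε' := by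
        have hεle : ε ≤ ε' / (C0 + 1) := min_le_right _ _
        have : C0 * ε ≤ C0 * (ε' / (C0 + 1)) := mul_le_mul_of_nonneg_left hεle hC0nn
        calc C0 * ε ≤ C0 * (ε' / (C0 + 1)) := this
        _ ≤ ε' := by
            have h1 : (0:ℝ) < C0 + 1 := by linarith
            rw [mul_div_assoc'] at *
            rw [div_le_iff₀ h1]
            calc C0 * ε' ≤ (C0 + 1) * ε' := mul_le_mul_of_nonneg_right (by linarith) hε'.le
            _ = ε' * (C0 + 1) := by ring
      calc c^2 * ∫ t in (0:ℝ)..h, (f t)^2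
          = c^2 * (∫ t in (0:ℝ)..ε, (f t)^2) + c^2 * ∫ t in ε..h, (f t)^2 := by
            rw [hsplit]; ring
      _ ≤ c^2 * (L^2 * h^2 * ε) + ((∫ t in ε..h, (f' t)^2)
            + c * ((f ε)^2 * (Real.cos (c*ε) / Real.sin (c*ε)))) := by
            have := mul_le_mul_of_nonneg_left h1 (by positivity : (0:ℝ) ≤ c^2)
            linarith
      _ ≤ c^2 * (L^2 * h^2 * ε) + ((∫ t in (0:ℝ)..h, (f' t)^2) + c * L^2 * h * ε) := by
            linarith
      _ = (∫ t in (0:ℝ)..h, (f' t)^2) + C0 * ε := by rw [hC0]; ring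
      _ ≤ (∫ t in (0:ℝ)..h, (f' t)^2) + ε' := by linarith
    exact le_of_forall_pos_le_add hstep
  -- convert
  have hc2 : (2*h/Real.pi)^2 * c^2 = 1 := by
    rw [hcdef]; field_simp
  calc (∫ t in (0:ℝ)..h, (f t)^2)
      = ((2*h/Real.pi)^2 * c^2) * ∫ t in (0:ℝ)..h, (f t)^2 := by rw [hc2, one_mul]
  _ = (2*h/Real.pi)^2 * (c^2 * ∫ t in (0:ℝ)..h, (f t)^2) := by ring
  _ ≤ (2*h/Real.pi)^2 * ∫ t in (0:ℝ)..h, (f' t)^2 :=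
      mul_le_mul_of_nonneg_left main (sq_nonneg _)


lemma aux_wirtinger_left (f f' : ℝ → ℝ) (hd : ∀ t, HasDerivAt f (f' t) t) (hc : Continuous f')
    {a b : ℝ} (hab : a ≤ b) (hfa : f a = 0) :
    ∫ t in a..b, (f t)^2 ≤ (2*(b-a)/Real.pi)^2 * ∫ t in a..b, (f' t)^2 := by
  rcases eq_or_lt_of_le hab with h | h
  · subst h; simp
  · have hdF : ∀ t, HasDerivAt (fun u => f (a + u)) (f' (a + t)) t := by
      intro t
      have := HasDerivAt.comp_const_add (a := a) (x := t) (hf := hd (a + t))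
      simpa using this
    have hcF : Continuous fun t => f' (a + t) := hc.comp (continuous_const.add continuous_id)
    have hW := aux_wirtinger (fun u => f (a + u)) (fun u => f' (a + u)) hdF hcF
      (sub_pos.mpr h) (by simpa using hfa)
    have e1 : (∫ t in (0:ℝ)..(b-a), (f (a + t))^2) = ∫ t in a..b, (f t)^2 := by
      rw [intervalIntegral.integral_comp_add_left (fun t => (f t)^2) a]
      norm_num
    have e2 : (∫ t in (0:ℝ)..(b-a), (f' (a + t))^2) = ∫ t in a..b, (f' t)^2 := by
      rw [intervalIntegral.integral_comp_add_left (fun t => (f' t)^2) a]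
      norm_num
    rw [e1, e2] at hW
    simpa using hW

lemma aux_wirtinger_right (f f' : ℝ → ℝ) (hd : ∀ t, HasDerivAt f (f' t) t) (hc : Continuous f')
    {a b : ℝ} (hab : a ≤ b) (hfb : f b = 0) :
    ∫ t in a..b, (f t)^2 ≤ (2*(b-a)/Real.pi)^2 * ∫ t in a..b, (f' t)^2 := by
  rcases eq_or_lt_of_le hab with h | h
  · subst h; simp
  · have hdF : ∀ t, HasDerivAt (fun u => f (b - u)) (-f' (b - t)) t := by
      intro t
      have := HasDerivAt.comp_const_sub (a := b) (x := t) (hf := hd (b - t))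
      simpa using this
    have hcF : Continuous fun t => -f' (b - t) :=
      (hc.comp (continuous_const.sub continuous_id)).neg
    have hW := aux_wirtinger (fun u => f (b - u)) (fun u => -f' (b - u)) hdF hcF
      (sub_pos.mpr h) (by simpa using hfb)
    have e1 : (∫ t in (0:ℝ)..(b-a), (f (b - t))^2) = ∫ t in a..b, (f t)^2 := by
      rw [intervalIntegral.integral_comp_sub_left (fun t => (f t)^2) b]
      norm_num
    have e2 : (∫ t in (0:ℝ)..(b-a), (-f' (b - t))^2) = ∫ t in a..b, (f' t)^2 := by
      simp only [neg_sq]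
      rw [intervalIntegral.integral_comp_sub_left (fun t => (f' t)^2) b]
      norm_num
    rw [e1, e2] at hW
    simpa using hW


-- derivative of the cosine polynomial
lemma aux_hasDeriv (M : ℕ) (c : ℕ → ℝ) (t : ℝ) :
    HasDerivAt (fun u => c 0 / Real.sqrt 2
        + ∑ k ∈ Finset.Icc 1 M, c k * Real.cos (Real.pi * k * u))
      (∑ k ∈ Finset.Icc 1 M, -(c k * (Real.pi * k)) * Real.sin (Real.pi * k * t)) t := by
  apply HasDerivAt.const_add
  apply HasDerivAt.fun_sum
  intro k _
  have h1 : HasDerivAt (fun u : ℝ => Real.cos (Real.pi * k * u))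
      (-Real.sin (Real.pi * k * t) * (Real.pi * k * 1)) t :=
    (Real.hasDerivAt_cos _).comp t ((hasDerivAt_id t).const_mul (Real.pi * k))
  have := h1.const_mul (c k)
  refine this.congr_deriv ?_
  ring

-- per-interval Wirtinger estimate
lemma aux_interval (p q : ℝ → ℝ) (hd : ∀ t, HasDerivAt p (q t) t) (hq : Continuous q)
    (a b ξ δ : ℝ) (h1 : a ≤ ξ) (h2 : ξ ≤ b) (hda : ξ - a ≤ δ/2) (hdb : b - ξ ≤ δ/2)
    (hδ : 0 ≤ δ) :
    ∫ t in a..b, (p t - p ξ)^2 ≤ (δ/Real.pi)^2 * ∫ t in a..b, (q t)^2 := by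
  have hπ := Real.pi_pos
  have hpc : Continuous p := by
    rw [continuous_iff_continuousAt]; exact fun t => (hd t).continuousAt
  have hd' : ∀ t, HasDerivAt (fun u => p u - p ξ) (q t) t := fun t => (hd t).sub_const _
  have hfc : Continuous fun u => p u - p ξ := hpc.sub continuous_const
  have hint : ∀ u v : ℝ, IntervalIntegrable (fun t => (p t - p ξ)^2) volume u v :=
    fun u v => ((hfc.pow 2).intervalIntegrable _ _)
  have hqint : ∀ u v : ℝ, IntervalIntegrable (fun t => (q t)^2) volume u v :=
    fun u v => ((hq.pow 2).intervalIntegrable _ _)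
  have hsplit : (∫ t in a..b, (p t - p ξ)^2)
      = (∫ t in a..ξ, (p t - p ξ)^2) + ∫ t in ξ..b, (p t - p ξ)^2 :=
    (intervalIntegral.integral_add_adjacent_intervals (hint a ξ) (hint ξ b)).symm
  have hqsplit : (∫ t in a..b, (q t)^2)
      = (∫ t in a..ξ, (q t)^2) + ∫ t in ξ..b, (q t)^2 :=
    (intervalIntegral.integral_add_adjacent_intervals (hqint a ξ) (hqint ξ b)).symm
  have hL := aux_wirtinger_right (fun u => p u - p ξ) q hd' hq h1 (by simp)
  have hR := aux_wirtinger_left (fun u => p u - p ξ) q hd' hq h2 (by simp)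
  have hqnnL : 0 ≤ ∫ t in a..ξ, (q t)^2 :=
    intervalIntegral.integral_nonneg h1 (fun t _ => sq_nonneg _)
  have hqnnR : 0 ≤ ∫ t in ξ..b, (q t)^2 :=
    intervalIntegral.integral_nonneg h2 (fun t _ => sq_nonneg _)
  have hξa : 0 ≤ ξ - a := by linarith
  have hbξ : 0 ≤ b - ξ := by linarith
  have hcL : (2*(ξ-a)/Real.pi)^2 ≤ (δ/Real.pi)^2 := by
    refine pow_le_pow_left₀ (by positivity) ?_ 2
    exact (div_le_div_iff_of_pos_right hπ).mpr (by linarith)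
  have hcR : (2*(b-ξ)/Real.pi)^2 ≤ (δ/Real.pi)^2 := by
    refine pow_le_pow_left₀ (by positivity) ?_ 2
    exact (div_le_div_iff_of_pos_right hπ).mpr (by linarith)
  calc ∫ t in a..b, (p t - p ξ)^2
      = (∫ t in a..ξ, (p t - p ξ)^2) + ∫ t in ξ..b, (p t - p ξ)^2 := hsplit
  _ ≤ (2*(ξ-a)/Real.pi)^2 * (∫ t in a..ξ, (q t)^2)
        + (2*(b-ξ)/Real.pi)^2 * ∫ t in ξ..b, (q t)^2 := add_le_add hL hR
  _ ≤ (δ/Real.pi)^2 * (∫ t in a..ξ, (q t)^2) + (δ/Real.pi)^2 * ∫ t in ξ..b, (q t)^2 :=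
      add_le_add (mul_le_mul_of_nonneg_right hcL hqnnL) (mul_le_mul_of_nonneg_right hcR hqnnR)
  _ = (δ/Real.pi)^2 * ∫ t in a..b, (q t)^2 := by rw [hqsplit]; ring

-- integrability of bounded measurable functions on [0,1]
lemma aux_bint (f : ℝ → ℝ) (hm : Measurable f) (C : ℝ)
    (hC : ∀ t ∈ Set.Ioc (0:ℝ) 1, |f t| ≤ C) :
    IntervalIntegrable f volume 0 1 := by
  rw [intervalIntegrable_iff, Set.uIoc_of_le (by norm_num : (0:ℝ) ≤ 1)]
  refine Measure.integrableOn_of_bounded (M := C) measure_Ioc_lt_top.ne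
    hm.aestronglyMeasurable ?_
  rw [ae_restrict_iff' measurableSet_Ioc]
  exact ae_of_all _ fun t ht => by rw [Real.norm_eq_abs]; exact hC t ht

-- reverse triangle inequality in coefficient space
lemma aux_rev (n : ℕ) (u v : ℕ → ℝ) (ε : ℝ) (hε0 : 0 ≤ ε) (hε1 : ε ≤ 1)
    (hA : (∑ k ∈ Finset.range n, (u k - v k)^2) ≤ ε^2 * ∑ k ∈ Finset.range n, (u k)^2) :
    (1-ε)^2 * (∑ k ∈ Finset.range n, (u k)^2) ≤ ∑ k ∈ Finset.range n, (v k)^2 := by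
  set U : EuclideanSpace ℝ (Fin n) := WithLp.toLp 2 (fun i => u i) with hU
  set V : EuclideanSpace ℝ (Fin n) := WithLp.toLp 2 (fun i => v i) with hV
  have hUn : ‖U‖^2 = ∑ k ∈ Finset.range n, (u k)^2 := by
    rw [EuclideanSpace.norm_eq, Real.sq_sqrt (by positivity)]
    rw [← Fin.sum_univ_eq_sum_range (fun k => (u k)^2)]
    exact Finset.sum_congr rfl fun i _ => by rw [Real.norm_eq_abs, sq_abs]
  have hVn : ‖V‖^2 = ∑ k ∈ Finset.range n, (v k)^2 := by
    rw [EuclideanSpace.norm_eq, Real.sq_sqrt (by positivity)]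
    rw [← Fin.sum_univ_eq_sum_range (fun k => (v k)^2)]
    exact Finset.sum_congr rfl fun i _ => by rw [Real.norm_eq_abs, sq_abs]
  have hUVn : ‖U - V‖^2 = ∑ k ∈ Finset.range n, (u k - v k)^2 := by
    rw [EuclideanSpace.norm_eq, Real.sq_sqrt (by positivity)]
    rw [← Fin.sum_univ_eq_sum_range (fun k => (u k - v k)^2)]
    refine Finset.sum_congr rfl fun i _ => ?_
    rw [Real.norm_eq_abs, sq_abs]
    have : (U - V) i = u i - v i := rfl
    rw [this]
  have hUV : ‖U - V‖ ≤ ε * ‖U‖ := by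
    have h1 : ‖U - V‖^2 ≤ (ε * ‖U‖)^2 := by
      rw [hUVn, mul_pow, hUn]; exact hA
    have h2 : (0:ℝ) ≤ ε * ‖U‖ := by positivity
    exact (pow_le_pow_iff_left₀ (norm_nonneg _) h2 (by norm_num)).mp h1
  have htri : ‖U‖ - ‖U - V‖ ≤ ‖V‖ := by
    have := norm_sub_norm_le U (U - V)
    simpa using this
  have h3 : (1 - ε) * ‖U‖ ≤ ‖V‖ := by
    have : (1-ε) * ‖U‖ ≤ ‖U‖ - ‖U - V‖ := by nlinarith [hUV]
    linarith
  have h4 : ((1-ε) * ‖U‖)^2 ≤ ‖V‖^2 := by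
    apply pow_le_pow_left₀ (mul_nonneg (by linarith) (norm_nonneg _)) h3
  rw [mul_pow, hUn, hVn] at h4
  exact h4

end AuxApproxOp

/-- Approximation operator bound: for `p ∈ P_M` with coefficients `c`, let `g` be the
step function `Σ_j p(x_j) χ_j` (with `χ_j` the indicator of `(y_{j−1}, y_j]`) and let
`Sp ∈ P_M`, with coefficients `d`, be the orthogonal projection of `g` onto `P_M`
(characterized by `⟨g − Sp, q⟩ = 0` for all `q ∈ P_M`). Then
`‖p − Sp‖₂ ≤ δM‖p‖₂`, and hence `‖Sp‖₂ ≥ (1 − δM)‖p‖₂`, i.e. `S` is invertible on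
`P_M` with `‖S⁻¹‖ ≤ (1 − δM)⁻¹`. -/
theorem approximation_operator_bound (M r : ℕ) (x y w : ℕ → ℝ) (δ : ℝ) (hr : 1 ≤ r)
    (hmono : ∀ j, 1 ≤ j → j < r → x j < x (j + 1))
    (hx1 : x 1 = 0) (hxr : x r = 1)
    (hx0 : x 0 = -x 1) (hxr1 : x (r + 1) = 2 - x r)
    (hy : ∀ j ≤ r, y j = (x j + x (j + 1)) / 2)
    (hw : ∀ j, 1 ≤ j → j ≤ r → w j = (x (j + 1) - x (j - 1)) / 2)
    (hδ : ∀ j ≤ r, x (j + 1) - x j ≤ δ)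
    (hgap : δ < 1 / M)
    (P : (ℕ → ℝ) → ℝ → ℝ)
    (hP : ∀ (c : ℕ → ℝ) (t : ℝ), P c t = c 0 / Real.sqrt 2 +
      ∑ k ∈ Finset.Icc 1 M, c k * Real.cos (Real.pi * k * t))
    (c d : ℕ → ℝ) (g : ℝ → ℝ)
    (hg : ∀ t : ℝ, g t = ∑ j ∈ Finset.Icc 1 r,
      P c (x j) * Set.indicator (Set.Ioc (y (j - 1)) (y j)) (fun _ => (1:ℝ)) t)
    (hproj : ∀ e : ℕ → ℝ, (∫ t in (0:ℝ)..1, (g t - P d t) * P e t) = 0) :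
    (∫ t in (0:ℝ)..1, (P c t - P d t) ^ 2) ≤
        (δ * M) ^ 2 * (∫ t in (0:ℝ)..1, (P c t) ^ 2) ∧
      (1 - δ * M) ^ 2 * (∫ t in (0:ℝ)..1, (P c t) ^ 2) ≤
        ∫ t in (0:ℝ)..1, (P d t) ^ 2 := by
  have hπ := Real.pi_pos
  have habs3 : ∀ a b : ℝ, |a - b| ≤ |a| + |b| := by
    intro a b
    calc |a - b| = |a + -b| := by rw [sub_eq_add_neg]
    _ ≤ |a| + |-b| := abs_add_le _ _
    _ = |a| + |b| := by rw [abs_neg]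
  -- basic facts
  have hx0' : x 0 = 0 := by rw [hx0, hx1, neg_zero]
  have hxr1' : x (r+1) = 1 := by rw [hxr1, hxr]; norm_num
  have hδ0 : 0 ≤ δ := by
    have h := hδ 0 (by omega)
    rw [hx0', hx1] at h
    linarith
  have hM1 : 1 ≤ M := by
    by_contra hM
    push_neg at hM
    have hM0 : M = 0 := by omega
    rw [hM0] at hgap
    norm_num at hgap
    linarith
  have hMpos : (0:ℝ) < M := by exact_mod_cast hM1
  have hδM1 : δ * M < 1 := (lt_div_iff₀ hMpos).mp hgap
  have hδM0 : 0 ≤ δ * M := mul_nonneg hδ0 (Nat.cast_nonneg M)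
  -- monotonicity of x
  have hxstep : ∀ j, j ≤ r → x j ≤ x (j+1) := by
    intro j hj
    rcases Nat.eq_zero_or_pos j with h0 | h1
    · subst h0; rw [hx0', hx1]
    · rcases Nat.lt_or_ge j r with h2 | h2
      · exact (hmono j h1 h2).le
      · have hjr : j = r := le_antisymm hj h2
        subst hjr; rw [hxr, hxr1']
  -- y facts
  have hy0 : y 0 = 0 := by rw [hy 0 (by omega), hx0', hx1]; norm_num
  have hyr : y r = 1 := by rw [hy r le_rfl, hxr, hxr1']; norm_num
  have hymono : ∀ i, i < r → y i ≤ y (i+1) := by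
    intro i hi
    rw [hy i (by omega), hy (i+1) (by omega)]
    have h1 := hxstep i (by omega)
    have h2 := hxstep (i+1) (by omega)
    linarith
  have hymono' : ∀ i j, i ≤ j → j ≤ r → y i ≤ y j := by
    intro i j hij hjr
    induction j with
    | zero =>
      have hi0 : i = 0 := by omega
      subst hi0
      exact le_rfl
    | succ n ih =>
      rcases Nat.lt_or_ge i (n+1) with h | h
      · exact (ih (by omega) (by omega)).trans (hymono n (by omega))
      · have : i = n + 1 := by omega
        subst this; exact le_rfl
  have hxy1 : ∀ j, 1 ≤ j → j ≤ r → y (j-1) ≤ x j := by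
    intro j h1 h2
    obtain ⟨j', rfl⟩ : ∃ j', j = j' + 1 := ⟨j - 1, by omega⟩
    simp only [Nat.add_sub_cancel]
    rw [hy j' (by omega)]
    have := hxstep j' (by omega)
    linarith
  have hxy2 : ∀ j, 1 ≤ j → j ≤ r → x j ≤ y j := by
    intro j h1 h2
    rw [hy j h2]
    have := hxstep j (by omega)
    linarith
  have hhalf1 : ∀ j, 1 ≤ j → j ≤ r → x j - y (j-1) ≤ δ/2 := by
    intro j h1 h2
    obtain ⟨j', rfl⟩ : ∃ j', j = j' + 1 := ⟨j - 1, by omega⟩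
    simp only [Nat.add_sub_cancel]
    rw [hy j' (by omega)]
    have := hδ j' (by omega)
    linarith
  have hhalf2 : ∀ j, 1 ≤ j → j ≤ r → y j - x j ≤ δ/2 := by
    intro j h1 h2
    rw [hy j h2]
    have := hδ j h2
    linarith
  -- rewrite P via formulas
  set pC : ℝ → ℝ := fun t => c 0 / Real.sqrt 2
      + ∑ k ∈ Finset.Icc 1 M, c k * Real.cos (Real.pi * k * t) with hpC
  set pD : ℝ → ℝ := fun t => d 0 / Real.sqrt 2
      + ∑ k ∈ Finset.Icc 1 M, d k * Real.cos (Real.pi * k * t) with hpD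
  have hPc : P c = pC := funext fun t => hP c t
  have hPd : P d = pD := funext fun t => hP d t
  rw [hPc, hPd]
  rw [hPc] at hg
  rw [hPd] at hproj
  -- continuity
  set q : ℝ → ℝ := fun t => ∑ k ∈ Finset.Icc 1 M,
      -(c k * (Real.pi * k)) * Real.sin (Real.pi * k * t) with hq
  have hqcont : Continuous q := continuous_finset_sum _ fun k _ =>
    continuous_const.mul (Real.continuous_sin.comp (continuous_const.mul continuous_id))
  have hder : ∀ t, HasDerivAt pC (q t) t := fun t => aux_hasDeriv M c t
  have hpCcont : Continuous pC := by
    rw [continuous_iff_continuousAt]; exact fun t => (hder t).continuousAt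
  have hpDcont : Continuous pD := continuous_const.add <| continuous_finset_sum _ fun k _ =>
    continuous_const.mul (Real.continuous_cos.comp (continuous_const.mul continuous_id))
  -- g is the step function value on each interval
  have hgval : ∀ i, i < r → ∀ t ∈ Set.Ioc (y i) (y (i+1)), g t = pC (x (i+1)) := by
    intro i hi t ht
    rw [hg t]
    rw [Finset.sum_eq_single_of_mem (i+1) (by simp; omega)]
    · simp only [Nat.add_sub_cancel]
      rw [Set.indicator_of_mem ht, mul_one]
    · intro j hj hne
      simp only [Finset.mem_Icc] at hj
      have hz : Set.indicator (Set.Ioc (y (j-1)) (y j)) (fun _ => (1:ℝ)) t = 0 := by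
        apply Set.indicator_of_notMem
        intro hmem
        rcases Nat.lt_or_ge j (i+1) with hlt | hge
        · have : y j ≤ y i := hymono' j i (by omega) (by omega)
          exact absurd hmem.2 (by linarith [ht.1])
        · have hij : i + 1 ≤ j - 1 := by omega
          have : y (i+1) ≤ y (j-1) := hymono' (i+1) (j-1) hij (by omega)
          exact absurd hmem.1 (by linarith [ht.2])
      rw [hz, mul_zero]
  -- partition of [0,1]
  have hpiece_eq : ∀ i, i < r → (∫ t in y i..y (i+1), (pC t - g t)^2)
      = ∫ t in y i..y (i+1), (pC t - pC (x (i+1)))^2 := by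
    intro i hi
    rw [intervalIntegral.integral_of_le (hymono i hi),
        intervalIntegral.integral_of_le (hymono i hi)]
    apply setIntegral_congr_fun measurableSet_Ioc
    intro t ht
    have hgt := hgval i hi t ht
    simp only [hgt]
  have hpiece_int : ∀ i, i < r →
      IntervalIntegrable (fun t => (pC t - g t)^2) volume (y i) (y (i+1)) := by
    intro i hi
    rw [intervalIntegrable_iff_integrableOn_Ioc_of_le (hymono i hi)]
    have hcont : IntegrableOn (fun t => (pC t - pC (x (i+1)))^2) (Set.Ioc (y i) (y (i+1)))
        volume :=
      (((hpCcont.sub continuous_const).pow 2).integrableOn_Ioc)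
    apply hcont.congr_fun ?_ measurableSet_Ioc
    intro t ht
    have hgt := hgval i hi t ht
    simp only [hgt]
  have hEsum := intervalIntegral.sum_integral_adjacent_intervals (μ := volume)
      (a := y) (n := r) (f := fun t => (pC t - g t)^2) hpiece_int
  rw [hy0, hyr] at hEsum
  -- per-interval Wirtinger bound
  have hqint : ∀ a b : ℝ, IntervalIntegrable (fun t => (q t)^2) volume a b :=
    fun a b => (hqcont.pow 2).intervalIntegrable _ _
  have hqsum := intervalIntegral.sum_integral_adjacent_intervals (μ := volume)
      (a := y) (n := r) (f := fun t => (q t)^2) (fun i _ => hqint _ _)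
  rw [hy0, hyr] at hqsum
  have hE : (∫ t in (0:ℝ)..1, (pC t - g t)^2)
      ≤ (δ/Real.pi)^2 * ∫ t in (0:ℝ)..1, (q t)^2 := by
    rw [← hEsum, ← hqsum, Finset.mul_sum]
    apply Finset.sum_le_sum
    intro i hi
    have hir : i < r := Finset.mem_range.mp hi
    rw [hpiece_eq i hir]
    have h1 := hxy1 (i+1) (by omega) (by omega)
    have h2 := hxy2 (i+1) (by omega) (by omega)
    have h3 := hhalf1 (i+1) (by omega) (by omega)
    have h4 := hhalf2 (i+1) (by omega) (by omega)
    simp only [Nat.add_sub_cancel] at h1 h3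
    exact aux_interval pC q hder hqcont (y i) (y (i+1)) (x (i+1)) δ h1 h2 h3 h4 hδ0
  -- Bernstein
  have hparc := aux_parseval M c
  have hpard := aux_parseval M d
  have hparq : (∫ t in (0:ℝ)..1, (q t)^2)
      = (∑ k ∈ Finset.Icc 1 M, (c k * (Real.pi * k))^2) / 2 := by
    have := aux_parseval_sin M (fun k => -(c k * (Real.pi * k)))
    simp only [neg_sq] at this
    rw [hq]
    exact this
  have hbern : (∫ t in (0:ℝ)..1, (q t)^2)
      ≤ (Real.pi * M)^2 * ∫ t in (0:ℝ)..1, (pC t)^2 := by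
    rw [hparq, hpC, hparc]
    have hterm : ∀ k ∈ Finset.Icc 1 M, (c k * (Real.pi * k))^2
        ≤ (Real.pi * M)^2 * (c k)^2 := by
      intro k hk
      simp only [Finset.mem_Icc] at hk
      have hkM : (k:ℝ) ≤ M := by exact_mod_cast hk.2
      have : (Real.pi * k)^2 ≤ (Real.pi * M)^2 := by
        apply pow_le_pow_left₀ (by positivity)
        nlinarith
      nlinarith [sq_nonneg (c k)]
    have hsum := Finset.sum_le_sum hterm
    rw [← Finset.mul_sum] at hsum
    nlinarith [sq_nonneg (c 0), sq_nonneg (Real.pi * M)]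
  -- integrability for Pythagoras
  have hgeq : g = fun t => ∑ j ∈ Finset.Icc 1 r,
      pC (x j) * Set.indicator (Set.Ioc (y (j - 1)) (y j)) (fun _ => (1:ℝ)) t := funext hg
  have hgm : Measurable g := by
    rw [hgeq]
    apply Finset.measurable_sum
    intro j _
    exact (measurable_const.indicator measurableSet_Ioc).const_mul _
  set BG : ℝ := ∑ j ∈ Finset.Icc 1 r, |pC (x j)| with hBG
  have hgbd : ∀ t, |g t| ≤ BG := by
    intro t
    rw [hg t]
    calc |∑ j ∈ Finset.Icc 1 r, pC (x j) *
          Set.indicator (Set.Ioc (y (j - 1)) (y j)) (fun _ => (1:ℝ)) t|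
        ≤ ∑ j ∈ Finset.Icc 1 r, |pC (x j) *
          Set.indicator (Set.Ioc (y (j - 1)) (y j)) (fun _ => (1:ℝ)) t| :=
          Finset.abs_sum_le_sum_abs _ _
    _ ≤ BG := by
        apply Finset.sum_le_sum
        intro j _
        rw [abs_mul]
        by_cases hmem : t ∈ Set.Ioc (y (j-1)) (y j)
        · rw [Set.indicator_of_mem hmem]; simp
        · rw [Set.indicator_of_notMem hmem]; simp
  obtain ⟨BC, hBC⟩ := isCompact_Icc.exists_bound_of_continuousOn
    (s := Set.Icc (0:ℝ) 1) hpCcont.continuousOn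
  obtain ⟨BD, hBD⟩ := isCompact_Icc.exists_bound_of_continuousOn
    (s := Set.Icc (0:ℝ) 1) hpDcont.continuousOn
  have hsub : Set.Ioc (0:ℝ) 1 ⊆ Set.Icc (0:ℝ) 1 := Set.Ioc_subset_Icc_self
  have hI1 : IntervalIntegrable (fun t => (pC t - g t)^2) volume 0 1 := by
    apply aux_bint (fun t => (pC t - g t)^2) ((hpCcont.measurable.sub hgm).pow_const 2) ((BC + BG)^2)
    intro t ht
    have h1 : |pC t - g t| ≤ BC + BG := by
      calc |pC t - g t| ≤ |pC t| + |g t| := habs3 _ _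
      _ ≤ BC + BG := add_le_add (hBC t (hsub ht)) (hgbd t)
    rw [abs_of_nonneg (sq_nonneg _)]
    have h0 : (0:ℝ) ≤ BC + BG := le_trans (abs_nonneg _) h1
    have := abs_le.mp h1
    exact sq_le_sq' (by linarith) (by linarith)
  have hI2 : IntervalIntegrable (fun t => (g t - pD t)^2) volume 0 1 := by
    apply aux_bint (fun t => (g t - pD t)^2) ((hgm.sub hpDcont.measurable).pow_const 2) ((BG + BD)^2)
    intro t ht
    have h1 : |g t - pD t| ≤ BG + BD := by
      calc |g t - pD t| ≤ |g t| + |pD t| := habs3 _ _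
      _ ≤ BG + BD := add_le_add (hgbd t) (hBD t (hsub ht))
    rw [abs_of_nonneg (sq_nonneg _)]
    have := abs_le.mp h1
    exact sq_le_sq' (by linarith) (by linarith)
  have hI3 : IntervalIntegrable (fun t => (g t - pD t) * (pC t - pD t)) volume 0 1 := by
    apply aux_bint (fun t => (g t - pD t) * (pC t - pD t)) ((hgm.sub hpDcont.measurable).mul
      (hpCcont.measurable.sub hpDcont.measurable)) ((BG + BD) * (BC + BD))
    intro t ht
    rw [abs_mul]
    apply mul_le_mul
    · calc |g t - pD t| ≤ |g t| + |pD t| := habs3 _ _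
      _ ≤ BG + BD := add_le_add (hgbd t) (hBD t (hsub ht))
    · calc |pC t - pD t| ≤ |pC t| + |pD t| := habs3 _ _
      _ ≤ BC + BD := add_le_add (hBC t (hsub ht)) (hBD t (hsub ht))
    · exact abs_nonneg _
    · exact le_trans (abs_nonneg (g t - pD t)) (le_trans (habs3 _ _)
        (add_le_add (hgbd t) (hBD t (hsub ht))))
  -- orthogonality from hproj
  have hPe : ∀ t : ℝ, P (fun k => c k - d k) t = pC t - pD t := by
    intro t
    rw [hP, hpC, hpD]
    simp only [sub_mul]
    rw [Finset.sum_sub_distrib]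
    ring
  have hzero : (∫ t in (0:ℝ)..1, (g t - pD t) * (pC t - pD t)) = 0 := by
    have := hproj (fun k => c k - d k)
    simp only [hPe] at this
    exact this
  -- Pythagoras: A = E - F2
  have hptw : ∀ t : ℝ, (pC t - pD t)^2
      = ((pC t - g t)^2 - (g t - pD t)^2) + 2*((g t - pD t)*(pC t - pD t)) := by
    intro t; ring
  have hpyth : (∫ t in (0:ℝ)..1, (pC t - pD t)^2)
      = (∫ t in (0:ℝ)..1, (pC t - g t)^2) - (∫ t in (0:ℝ)..1, (g t - pD t)^2) := by
    calc (∫ t in (0:ℝ)..1, (pC t - pD t)^2)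
        = ∫ t in (0:ℝ)..1, (((pC t - g t)^2 - (g t - pD t)^2)
            + 2*((g t - pD t)*(pC t - pD t))) := by
          apply intervalIntegral.integral_congr
          intro t _
          exact hptw t
    _ = ((∫ t in (0:ℝ)..1, (pC t - g t)^2) - (∫ t in (0:ℝ)..1, (g t - pD t)^2))
          + 2 * ∫ t in (0:ℝ)..1, ((g t - pD t)*(pC t - pD t)) := by
          rw [intervalIntegral.integral_add (hI1.sub hI2) (hI3.const_mul 2),
              intervalIntegral.integral_sub hI1 hI2,
              intervalIntegral.integral_const_mul]
    _ = (∫ t in (0:ℝ)..1, (pC t - g t)^2) - (∫ t in (0:ℝ)..1, (g t - pD t)^2) := by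
          rw [hzero]; ring
  have hF2nn : 0 ≤ ∫ t in (0:ℝ)..1, (g t - pD t)^2 :=
    intervalIntegral.integral_nonneg (by norm_num) (fun t _ => sq_nonneg _)
  -- first inequality
  have hconst : (δ/Real.pi)^2 * (Real.pi * M)^2 = (δ*M)^2 := by
    field_simp
  have hfirst : (∫ t in (0:ℝ)..1, (pC t - pD t)^2)
      ≤ (δ * M)^2 * ∫ t in (0:ℝ)..1, (pC t)^2 := by
    have hqnn : 0 ≤ (δ/Real.pi)^2 := sq_nonneg _
    calc (∫ t in (0:ℝ)..1, (pC t - pD t)^2)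
        ≤ ∫ t in (0:ℝ)..1, (pC t - g t)^2 := by rw [hpyth]; linarith
    _ ≤ (δ/Real.pi)^2 * ∫ t in (0:ℝ)..1, (q t)^2 := hE
    _ ≤ (δ/Real.pi)^2 * ((Real.pi * M)^2 * ∫ t in (0:ℝ)..1, (pC t)^2) :=
        mul_le_mul_of_nonneg_left hbern hqnn
    _ = (δ * M)^2 * ∫ t in (0:ℝ)..1, (pC t)^2 := by rw [← mul_assoc, hconst]
  refine ⟨hfirst, ?_⟩
  -- second inequality via Parseval and reverse triangle
  have hpare : (∫ t in (0:ℝ)..1, (pC t - pD t)^2)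
      = ((c 0 - d 0)^2 + ∑ k ∈ Finset.Icc 1 M, (c k - d k)^2) / 2 := by
    have h1 := aux_parseval M (fun k => c k - d k)
    have h2 : ∀ t : ℝ, (c 0 - d 0) / Real.sqrt 2
        + ∑ k ∈ Finset.Icc 1 M, (c k - d k) * Real.cos (Real.pi * k * t)
        = pC t - pD t := by
      intro t
      rw [hpC, hpD]
      simp only [sub_mul]
      rw [Finset.sum_sub_distrib]
      ring
    simp only [h2] at h1
    exact h1
  have hconv : ∀ f : ℕ → ℝ, (∑ k ∈ Finset.range (M+1), f k)
      = f 0 + ∑ k ∈ Finset.Icc 1 M, f k := by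
    intro f
    rw [Finset.sum_range_succ', ← Finset.Ico_add_one_right_eq_Icc 1 M, Finset.sum_Ico_eq_sum_range]
    rw [add_comm]
    congr 1
    exact Finset.sum_congr rfl fun i _ => by rw [add_comm 1 i]
  have hrev := aux_rev (M+1) c d (δ*M) hδM0 hδM1.le ?_
  · rw [hconv (fun k => (c k)^2), hconv (fun k => (d k)^2)] at hrev
    rw [hpC, hpD, hparc, hpard]
    linarith
  · rw [hconv (fun k => (c k - d k)^2), hconv (fun k => (c k)^2)]
    have h1 : ((c 0 - d 0)^2 + ∑ k ∈ Finset.Icc 1 M, (c k - d k)^2)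
        ≤ (δ*M)^2 * ((c 0)^2 + ∑ k ∈ Finset.Icc 1 M, (c k)^2) := by
      have := hfirst
      rw [hpare, hpC, hparc] at this
      linarith
    exact h1
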